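/- Let a ∈ ℝ^m and b ∈ ℝ^n, and let c ∈ ℝ^{m+n} be the concatenation of a and b. If Med(c) < Med(a), then Med(c) ≥ Med(b); similarly, if Med(c) > Med(a), then Med(c) ≤ Med(b). -/

import Mathlib

noncomputable section

noncomputable section

/-- The median of a finite tuple of reals (given as a list): `a_{(k+1)}` if the length is
`2k+1`, and `(a_{(k)} + a_{(k+1)})/2` if the length is `2k`, where `a_{(1)} ≤ … ≤ a_{(m)}`
are the order statistics. -/
def med (l : List ℝ) : ℝ :=
  let s := Multiset.sort (l : Multiset ℝ) (· ≤ ·)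
  if l.length % 2 = 1 then s.getD (l.length / 2) 0
  else (s.getD (l.length / 2 - 1) 0 + s.getD (l.length / 2) 0) / 2

namespace MedAux

open List

lemma sort_perm (l : List ℝ) : (Multiset.sort (l : Multiset ℝ) (· ≤ ·)).Perm l :=
  Multiset.coe_eq_coe.mp (Multiset.sort_eq _ _)

lemma sort_length (l : List ℝ) :
    (Multiset.sort (l : Multiset ℝ) (· ≤ ·)).length = l.length := by
  rw [Multiset.length_sort, Multiset.coe_card]

lemma sorted_getD_le {s : List ℝ} (hs : s.Pairwise (· ≤ ·)) {i j : ℕ}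
    (hij : i ≤ j) (hj : j < s.length) : s.getD i 0 ≤ s.getD j 0 := by
  rw [getD_eq_getElem _ _ (lt_of_le_of_lt hij hj), getD_eq_getElem _ _ hj]
  have := hs.rel_get_of_le (a := ⟨i, lt_of_le_of_lt hij hj⟩) (b := ⟨j, hj⟩)
    (Fin.mk_le_mk.mpr hij)
  simpa using this

lemma countA {s : List ℝ} (hs : s.Pairwise (· ≤ ·)) {M : ℝ} {j : ℕ}
    (hj : j < s.length) (h : M < s.getD j 0) :
    s.length ≤ s.countP (fun x => decide (M < x)) + j := by
  have hdrop : (s.drop j).countP (fun x => decide (M < x)) = (s.drop j).length := by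
    rw [countP_eq_length]
    intro x hx
    obtain ⟨i, hi, rfl⟩ := mem_iff_getElem.mp hx
    have h2 : j + i < s.length := by have := hi; rw [length_drop] at this; omega
    simp only [getElem_drop, decide_eq_true_eq]
    refine lt_of_lt_of_le h ?_
    have := sorted_getD_le hs (Nat.le_add_right j i) h2
    rwa [getD_eq_getElem _ _ h2] at this
  have hsplit : s.countP (fun x => decide (M < x))
      = (s.take j).countP (fun x => decide (M < x))
        + (s.drop j).countP (fun x => decide (M < x)) := by
    conv_lhs => rw [← take_append_drop j s]
    rw [countP_append]
  have hld := (length_drop (i := j) (l := s))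
  omega

lemma countB {s : List ℝ} (hs : s.Pairwise (· ≤ ·)) {M : ℝ} {j : ℕ}
    (hj : j < s.length) (h : s.getD j 0 ≤ M) :
    s.countP (fun x => decide (M < x)) + j + 1 ≤ s.length := by
  have htake : (s.take (j + 1)).countP (fun x => decide (M < x)) = 0 := by
    rw [countP_eq_zero]
    intro x hx
    obtain ⟨i, hi, rfl⟩ := mem_iff_getElem.mp hx
    have hi' : i ≤ j := by rw [length_take] at hi; omega
    simp only [getElem_take, decide_eq_true_eq, not_lt]
    refine le_trans ?_ h
    have := sorted_getD_le hs hi' hj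
    rwa [getD_eq_getElem _ _ (lt_of_le_of_lt hi' hj)] at this
  have hsplit : s.countP (fun x => decide (M < x))
      = (s.take (j + 1)).countP (fun x => decide (M < x))
        + (s.drop (j + 1)).countP (fun x => decide (M < x)) := by
    conv_lhs => rw [← take_append_drop (j + 1) s]
    rw [countP_append]
  have hle := countP_le_length (p := fun x => decide (M < x)) (l := s.drop (j + 1))
  have hld := (length_drop (i := j + 1) (l := s))
  omega

lemma getD_le_of_mem {s : List ℝ} (hs : s.Pairwise (· ≤ ·)) {M x : ℝ} {i : ℕ}
    (hx : x ∈ s) (hxM : M < x)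
    (hcount : s.countP (fun y => decide (M < y)) + i ≤ s.length) :
    s.getD i 0 ≤ x := by
  obtain ⟨j, hj, rfl⟩ := mem_iff_getElem.mp hx
  have hA := countA hs hj (by rwa [getD_eq_getElem _ _ hj])
  have hij : i ≤ j := by omega
  have := sorted_getD_le hs hij hj
  rwa [getD_eq_getElem _ _ hj] at this

lemma le_getD_of_mem {s : List ℝ} (hs : s.Pairwise (· ≤ ·)) {M x : ℝ} {i : ℕ}
    (hi : i < s.length) (hx : x ∈ s) (hxM : x ≤ M)
    (hcount : s.length ≤ s.countP (fun y => decide (M < y)) + i + 1) :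
    x ≤ s.getD i 0 := by
  obtain ⟨j, hj, rfl⟩ := mem_iff_getElem.mp hx
  have hB := countB (M := M) hs hj (by rw [getD_eq_getElem _ _ hj]; exact hxM)
  have hij : j ≤ i := by omega
  have := sorted_getD_le hs hij hi
  rwa [getD_eq_getElem _ _ hj] at this

lemma med_odd {l : List ℝ} (h : l.length % 2 = 1) :
    med l = (Multiset.sort (l : Multiset ℝ) (· ≤ ·)).getD (l.length / 2) 0 := by
  rw [med]; simp [h]

lemma med_even {l : List ℝ} (h : l.length % 2 = 0) :
    med l = ((Multiset.sort (l : Multiset ℝ) (· ≤ ·)).getD (l.length / 2 - 1) 0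
      + (Multiset.sort (l : Multiset ℝ) (· ≤ ·)).getD (l.length / 2) 0) / 2 := by
  rw [med]; simp [h]

lemma lt_getD_half {l : List ℝ} (hl : l ≠ []) {M : ℝ} (h : M < med l) :
    M < (Multiset.sort (l : Multiset ℝ) (· ≤ ·)).getD (l.length / 2) 0 := by
  have hlen := sort_length l
  have hpos : 1 ≤ l.length := length_pos_iff.mpr hl
  rcases Nat.mod_two_eq_zero_or_one l.length with he | ho
  · rw [med_even he] at h
    have hle := sorted_getD_le (Multiset.pairwise_sort (α := ℝ) (l : Multiset ℝ) (· ≤ ·))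
      (i := l.length / 2 - 1) (j := l.length / 2) (by omega) (by omega)
    linarith
  · rwa [med_odd ho] at h

lemma count_half {l : List ℝ} (hl : l ≠ []) {M : ℝ} (h : M < med l) :
    l.length ≤ l.countP (fun x => decide (M < x)) + l.length / 2 := by
  have hlen := sort_length l
  have hpos : 1 ≤ l.length := length_pos_iff.mpr hl
  have := countA (Multiset.pairwise_sort (α := ℝ) (l : Multiset ℝ) (· ≤ ·))
    (j := l.length / 2) (by omega) (lt_getD_half hl h)
  rwa [hlen, (sort_perm l).countP_eq] at this



lemma sort_map_neg (l : List ℝ) :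
    Multiset.sort ((l.map (fun x : ℝ => -x) : List ℝ) : Multiset ℝ) (· ≤ ·)
      = (((Multiset.sort (l : Multiset ℝ) (· ≤ ·)).map (fun x : ℝ => -x)).reverse) := by
  apply List.Perm.eq_of_pairwise' (r := (· ≤ ·))
  rotate_right
  · refine (Multiset.coe_eq_coe.mp (Multiset.sort_eq _ _)).trans ?_
    refine Perm.trans ?_ (List.reverse_perm _).symm
    exact ((Multiset.coe_eq_coe.mp (Multiset.sort_eq (α := ℝ) (l : Multiset ℝ) (· ≤ ·))).map _).symm
  · exact Multiset.pairwise_sort _ _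
  · rw [List.pairwise_reverse, List.pairwise_map]
    exact (Multiset.pairwise_sort (α := ℝ) (l : Multiset ℝ) (· ≤ ·)).imp (fun h => neg_le_neg h)

lemma getD_sort_neg (l : List ℝ) {i : ℕ} (hi : i < l.length) :
    (Multiset.sort ((l.map (fun x : ℝ => -x) : List ℝ) : Multiset ℝ) (· ≤ ·)).getD i 0
      = -(Multiset.sort (l : Multiset ℝ) (· ≤ ·)).getD (l.length - 1 - i) 0 := by
  have hlen : (Multiset.sort (l : Multiset ℝ) (· ≤ ·)).length = l.length := by
    rw [Multiset.length_sort, Multiset.coe_card]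
  rw [sort_map_neg]
  rw [getD_eq_getElem _ _ (by simp [hlen]; omega),
      getD_eq_getElem _ _ (by omega)]
  rw [List.getElem_reverse, List.getElem_map]
  congr 2
  simp [hlen]

lemma med_neg (l : List ℝ) (hl : l ≠ []) :
    med (l.map (fun x : ℝ => -x)) = - med l := by
  have hpos : 1 ≤ l.length := length_pos_iff.mpr hl
  have hlm : (l.map (fun x : ℝ => -x)).length = l.length := length_map _
  rcases Nat.mod_two_eq_zero_or_one l.length with he | ho
  · rw [med_even (l := l.map (fun x : ℝ => -x)) (by omega), med_even he, hlm]
    rw [getD_sort_neg l (i := l.length / 2 - 1) (by omega),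
        getD_sort_neg l (i := l.length / 2) (by omega)]
    have e1 : l.length - 1 - (l.length / 2 - 1) = l.length / 2 := by omega
    have e2 : l.length - 1 - l.length / 2 = l.length / 2 - 1 := by omega
    rw [e1, e2]; ring
  · rw [med_odd (l := l.map (fun x : ℝ => -x)) (by omega), med_odd ho, hlm]
    rw [getD_sort_neg l (i := l.length / 2) (by omega)]
    have e : l.length - 1 - l.length / 2 = l.length / 2 := by omega
    rw [e]

lemma med_core (a b : List ℝ) (ha : a ≠ []) (hb : b ≠ [])
    (h1 : med (a ++ b) < med a) (h2 : med (a ++ b) < med b) : False := by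
  set M : ℝ := med (a ++ b) with hMdef
  have hm : 1 ≤ a.length := length_pos_iff.mpr ha
  have hn : 1 ≤ b.length := length_pos_iff.mpr hb
  have hab : (a ++ b) ≠ [] := by simp [ha]
  have hN : (a ++ b).length = a.length + b.length := (length_append (as := a) (bs := b))
  have hca := count_half ha h1
  have hcb := count_half hb h2
  have hcc : (a ++ b).countP (fun x => decide (M < x))
      = a.countP (fun x => decide (M < x)) + b.countP (fun x => decide (M < x)) :=
    countP_append
  have hscs : (Multiset.sort ((a ++ b : List ℝ) : Multiset ℝ) (· ≤ ·)).Pairwise (· ≤ ·) :=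
    Multiset.pairwise_sort _ _
  have hlc := sort_length (a ++ b)
  rcases Nat.mod_two_eq_zero_or_one (a ++ b).length with hNe | hNo
  swap
  · -- N odd
    have hMe := med_odd hNo
    have hB := countB (M := M) hscs (j := (a ++ b).length / 2) (by omega)
      (le_of_eq hMe.symm)
    rw [hlc, (sort_perm (a ++ b)).countP_eq] at hB
    omega
  · -- N even
    have hMe := med_even hNe
    have hlt : M < (Multiset.sort ((a ++ b : List ℝ) : Multiset ℝ) (· ≤ ·)).getD
        ((a ++ b).length / 2) 0 := by
      by_contra hcon
      push_neg at hcon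
      have hB := countB (M := M) hscs (j := (a ++ b).length / 2) (by omega) hcon
      rw [hlc, (sort_perm (a ++ b)).countP_eq] at hB
      omega
    have hlt2 : (Multiset.sort ((a ++ b : List ℝ) : Multiset ℝ) (· ≤ ·)).getD
        ((a ++ b).length / 2 - 1) 0 < M := by linarith [hMe]
    have hB2 := countB (M := M) hscs (j := (a ++ b).length / 2 - 1) (by omega)
      (le_of_lt hlt2)
    rw [hlc, (sort_perm (a ++ b)).countP_eq] at hB2
    rcases Nat.mod_two_eq_zero_or_one a.length with hae | hao
    swap
    · omega
    rcases Nat.mod_two_eq_zero_or_one b.length with hbe | hbo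
    swap
    · omega
    -- both even
    have hpa : a.countP (fun x => decide (M < x)) = a.length / 2 := by omega
    have hpb : b.countP (fun x => decide (M < x)) = b.length / 2 := by omega
    have hpc : (a ++ b).countP (fun x => decide (M < x)) = (a ++ b).length / 2 := by omega
    have hpcs : (Multiset.sort ((a ++ b : List ℝ) : Multiset ℝ) (· ≤ ·)).countP
        (fun x => decide (M < x)) = (a ++ b).length / 2 := by
      rw [(sort_perm (a ++ b)).countP_eq]; exact hpc
    -- sorted a facts
    have hsas : (Multiset.sort (a : Multiset ℝ) (· ≤ ·)).Pairwise (· ≤ ·) :=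
      Multiset.pairwise_sort _ _
    have hla := sort_length a
    have hsbs : (Multiset.sort (b : Multiset ℝ) (· ≤ ·)).Pairwise (· ≤ ·) :=
      Multiset.pairwise_sort _ _
    have hlb := sort_length b
    have hpas : (Multiset.sort (a : Multiset ℝ) (· ≤ ·)).countP
        (fun x => decide (M < x)) = a.length / 2 := by
      rw [(sort_perm a).countP_eq]; exact hpa
    have hpbs : (Multiset.sort (b : Multiset ℝ) (· ≤ ·)).countP
        (fun x => decide (M < x)) = b.length / 2 := by
      rw [(sort_perm b).countP_eq]; exact hpb
    -- a's middle elements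
    have haM : M < (Multiset.sort (a : Multiset ℝ) (· ≤ ·)).getD (a.length / 2) 0 :=
      lt_getD_half ha h1
    have hbM : M < (Multiset.sort (b : Multiset ℝ) (· ≤ ·)).getD (b.length / 2) 0 :=
      lt_getD_half hb h2
    have haM1 : (Multiset.sort (a : Multiset ℝ) (· ≤ ·)).getD (a.length / 2 - 1) 0 ≤ M := by
      by_contra hcon
      push_neg at hcon
      have := countA hsas (j := a.length / 2 - 1) (by omega) hcon
      omega
    have hbM1 : (Multiset.sort (b : Multiset ℝ) (· ≤ ·)).getD (b.length / 2 - 1) 0 ≤ M := by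
      by_contra hcon
      push_neg at hcon
      have := countA hsbs (j := b.length / 2 - 1) (by omega) hcon
      omega
    -- memberships
    have hmemc : ∀ x : ℝ, x ∈ a ∨ x ∈ b →
        x ∈ Multiset.sort ((a ++ b : List ℝ) : Multiset ℝ) (· ≤ ·) := by
      intro x hx
      rw [(sort_perm (a ++ b)).mem_iff, mem_append]
      exact hx
    have hma1 : (Multiset.sort (a : Multiset ℝ) (· ≤ ·)).getD (a.length / 2 - 1) 0 ∈ a := by
      rw [← (sort_perm a).mem_iff, getD_eq_getElem _ _ (by omega)]
      exact getElem_mem _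
    have hmb1 : (Multiset.sort (b : Multiset ℝ) (· ≤ ·)).getD (b.length / 2 - 1) 0 ∈ b := by
      rw [← (sort_perm b).mem_iff, getD_eq_getElem _ _ (by omega)]
      exact getElem_mem _
    -- lower middle bounds
    have ineqA1 : (Multiset.sort (a : Multiset ℝ) (· ≤ ·)).getD (a.length / 2 - 1) 0
        ≤ (Multiset.sort ((a ++ b : List ℝ) : Multiset ℝ) (· ≤ ·)).getD
          ((a ++ b).length / 2 - 1) 0 :=
      le_getD_of_mem hscs (by omega) (hmemc _ (Or.inl hma1)) haM1 (by omega)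
    have ineqB1 : (Multiset.sort (b : Multiset ℝ) (· ≤ ·)).getD (b.length / 2 - 1) 0
        ≤ (Multiset.sort ((a ++ b : List ℝ) : Multiset ℝ) (· ≤ ·)).getD
          ((a ++ b).length / 2 - 1) 0 :=
      le_getD_of_mem hscs (by omega) (hmemc _ (Or.inr hmb1)) hbM1 (by omega)
    have medA : 2 * M < (Multiset.sort (a : Multiset ℝ) (· ≤ ·)).getD (a.length / 2 - 1) 0
        + (Multiset.sort (a : Multiset ℝ) (· ≤ ·)).getD (a.length / 2) 0 := by
      have := med_even hae
      rw [this] at h1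
      linarith
    have medB : 2 * M < (Multiset.sort (b : Multiset ℝ) (· ≤ ·)).getD (b.length / 2 - 1) 0
        + (Multiset.sort (b : Multiset ℝ) (· ≤ ·)).getD (b.length / 2) 0 := by
      have := med_even hbe
      rw [this] at h2
      linarith
    -- the element just above the median of c
    have hmemE : (Multiset.sort ((a ++ b : List ℝ) : Multiset ℝ) (· ≤ ·)).getD
        ((a ++ b).length / 2) 0 ∈ a ++ b := by
      rw [← (sort_perm (a ++ b)).mem_iff, getD_eq_getElem _ _ (by omega)]
      exact getElem_mem _
    rcases mem_append.mp hmemE with hEa | hEb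
    · have hEa' : (Multiset.sort ((a ++ b : List ℝ) : Multiset ℝ) (· ≤ ·)).getD
          ((a ++ b).length / 2) 0 ∈ Multiset.sort (a : Multiset ℝ) (· ≤ ·) := by
        rwa [(sort_perm a).mem_iff]
      have := getD_le_of_mem hsas (i := a.length / 2) hEa' hlt (by omega)
      linarith [hMe]
    · have hEb' : (Multiset.sort ((a ++ b : List ℝ) : Multiset ℝ) (· ≤ ·)).getD
          ((a ++ b).length / 2) 0 ∈ Multiset.sort (b : Multiset ℝ) (· ≤ ·) := by
        rwa [(sort_perm b).mem_iff]
      have := getD_le_of_mem hsbs (i := b.length / 2) hEb' hlt (by omega)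
      linarith [hMe]

end MedAux

/-- if `c` is the concatenation of `a ∈ ℝ^m` and `b ∈ ℝ^n`, then
`Med(c) < Med(a)` implies `Med(c) ≥ Med(b)`, and `Med(c) > Med(a)` implies
`Med(c) ≤ Med(b)`. -/
theorem med_concat (a b : List ℝ) (ha : a ≠ []) (hb : b ≠ []) :
    (med (a ++ b) < med a → med b ≤ med (a ++ b)) ∧
    (med a < med (a ++ b) → med (a ++ b) ≤ med b) := by
  constructor
  · intro h
    by_contra hc
    push_neg at hc
    exact MedAux.med_core a b ha hb h hc
  · intro h
    by_contra hc
    push_neg at hc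
    have ha' : a.map (fun x : ℝ => -x) ≠ [] := by
      simpa using ha
    have hb' : b.map (fun x : ℝ => -x) ≠ [] := by
      simpa using hb
    have hmap : a.map (fun x : ℝ => -x) ++ b.map (fun x : ℝ => -x)
        = (a ++ b).map (fun x : ℝ => -x) := List.map_append.symm
    have hab : (a ++ b) ≠ [] := by simp [ha]
    refine MedAux.med_core (a.map (fun x : ℝ => -x)) (b.map (fun x : ℝ => -x)) ha' hb' ?_ ?_
    · rw [hmap, MedAux.med_neg _ hab, MedAux.med_neg _ ha]
      linarith
    · rw [hmap, MedAux.med_neg _ hab, MedAux.med_neg _ hb]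
      linarith

end
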